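/- (Proposition 2.1, independence almost everywhere.) Let U ⊆ ℂ^m be a connected open set, k + l = m, let X_1, …, X_k : U → ℂ^m be holomorphic vector fields and f_1, …, f_l : U → ℂ holomorphic functions, and set H_i = h_{X_i} (1 ≤ i ≤ k) and H_{k+j} = f_j ∘ π (1 ≤ j ≤ l) on U × ℂ^m. Suppose there exists a point x₀ ∈ U at which X_1(x₀), …, X_k(x₀) are linearly independent and df_1(x₀), …, df_l(x₀) are linearly independent. Then the set of points (z,p) ∈ U × ℂ^m at which the differentials dH_1(z,p), …, dH_m(z,p) are linearly independent is open and dense in U × ℂ^m. -/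

import Mathlib

open Matrix Set

noncomputable section

/-- Partial derivative in the `z_i` direction of a function on `U × ℂ^m` (phase space). -/
def pderivZ {m : ℕ} (i : Fin m) (F : (Fin m → ℂ) × (Fin m → ℂ) → ℂ)
    (q : (Fin m → ℂ) × (Fin m → ℂ)) : ℂ :=
  fderiv ℂ F q (Pi.single i 1, 0)

/-- Partial derivative in the `p_i` direction of a function on `U × ℂ^m` (phase space). -/
def pderivP {m : ℕ} (i : Fin m) (F : (Fin m → ℂ) × (Fin m → ℂ) → ℂ)
    (q : (Fin m → ℂ) × (Fin m → ℂ)) : ℂ :=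
  fderiv ℂ F q (0, Pi.single i 1)

/-- Canonical Poisson bracket `{F,G} = Σᵢ (∂F/∂zᵢ ∂G/∂pᵢ − ∂F/∂pᵢ ∂G/∂zᵢ)`. -/
def poisson {m : ℕ} (F G : (Fin m → ℂ) × (Fin m → ℂ) → ℂ)
    (q : (Fin m → ℂ) × (Fin m → ℂ)) : ℂ :=
  ∑ i, (pderivZ i F q * pderivP i G q - pderivP i F q * pderivZ i G q)

/-- Hamiltonian vector field `X_H = (∂H/∂p, −∂H/∂z)`. -/
def hamVF {m : ℕ} (H : (Fin m → ℂ) × (Fin m → ℂ) → ℂ)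
    (q : (Fin m → ℂ) × (Fin m → ℂ)) : (Fin m → ℂ) × (Fin m → ℂ) :=
  (fun i => pderivP i H q, fun i => - pderivZ i H q)

/-- Jacobian matrix `(DX(z))_{ij} = ∂X_i/∂z_j`. -/
def jacM {m : ℕ} (X : (Fin m → ℂ) → (Fin m → ℂ)) (z : Fin m → ℂ) :
    Matrix (Fin m) (Fin m) ℂ :=
  Matrix.of fun i j => fderiv ℂ X z (Pi.single j 1) i

/-- Fiberwise-linear function `h_X(z,p) = Σⱼ pⱼ Xⱼ(z)` associated to a vector field `X`. -/
def fibLin {m : ℕ} (X : (Fin m → ℂ) → (Fin m → ℂ))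
    (q : (Fin m → ℂ) × (Fin m → ℂ)) : ℂ :=
  ∑ j, q.2 j * X q.1 j

/-- Cotangent lift of a vector field: `X̂(z,p) = (X(z), −(DX(z))ᵀ p)`. -/
def cotLiftVF {m : ℕ} (X : (Fin m → ℂ) → (Fin m → ℂ))
    (q : (Fin m → ℂ) × (Fin m → ℂ)) : (Fin m → ℂ) × (Fin m → ℂ) :=
  (X q.1, fun i => - ((jacM X q.1)ᵀ.mulVec q.2 i))

/-- Lie bracket of vector fields: `[X,Y](z) = DY(z)·X(z) − DX(z)·Y(z)`. -/
def lieBr {m : ℕ} (X Y : (Fin m → ℂ) → (Fin m → ℂ)) (z : Fin m → ℂ) : Fin m → ℂ :=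
  fderiv ℂ Y z (X z) - fderiv ℂ X z (Y z)

/-- Lie bracket of vector fields on phase space `ℂ^m × ℂ^m`. -/
def lieBr2 {m : ℕ} (V W : (Fin m → ℂ) × (Fin m → ℂ) → (Fin m → ℂ) × (Fin m → ℂ))
    (q : (Fin m → ℂ) × (Fin m → ℂ)) : (Fin m → ℂ) × (Fin m → ℂ) :=
  fderiv ℂ W q (V q) - fderiv ℂ V q (W q)

/-- Cotangent lift of a map: `Φ̂(z,p) = (Φ(z), ((DΦ(z))ᵀ)⁻¹ p)`. -/
def cotLiftMap {m : ℕ} (Φ : (Fin m → ℂ) → (Fin m → ℂ))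
    (q : (Fin m → ℂ) × (Fin m → ℂ)) : (Fin m → ℂ) × (Fin m → ℂ) :=
  (Φ q.1, ((jacM Φ q.1)ᵀ)⁻¹.mulVec q.2)

/-- The standard basis of `ℂ^m × ℂ^m` indexed by `Fin m ⊕ Fin m`. -/
def basis2 {m : ℕ} : Fin m ⊕ Fin m → (Fin m → ℂ) × (Fin m → ℂ)
  | Sum.inl j => (Pi.single j 1, 0)
  | Sum.inr j => (0, Pi.single j 1)

/-- Components of a vector in `ℂ^m × ℂ^m` indexed by `Fin m ⊕ Fin m`. -/
def comp2 {m : ℕ} (v : (Fin m → ℂ) × (Fin m → ℂ)) : Fin m ⊕ Fin m → ℂ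
  | Sum.inl i => v.1 i
  | Sum.inr i => v.2 i

/-- Total Jacobian matrix (in block coordinates `(z,p)`) of a self-map of phase space. -/
def jac2 {m : ℕ} (G : (Fin m → ℂ) × (Fin m → ℂ) → (Fin m → ℂ) × (Fin m → ℂ))
    (q : (Fin m → ℂ) × (Fin m → ℂ)) : Matrix (Fin m ⊕ Fin m) (Fin m ⊕ Fin m) ℂ :=
  Matrix.of fun a b => comp2 (fderiv ℂ G q (basis2 b)) a

/-- The standard symplectic matrix `J = [[0, I], [−I, 0]]` in `m×m` blocks. -/
def sympJ (m : ℕ) : Matrix (Fin m ⊕ Fin m) (Fin m ⊕ Fin m) ℂ :=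
  Matrix.fromBlocks 0 1 (-1) 0

end

section AuxiliaryAnalysis

open Metric Set Filter Topology

variable {E F : Type*} [NormedAddCommGroup E] [NormedSpace ℂ E]
  {F } [NormedAddCommGroup F] [NormedSpace ℂ F] [CompleteSpace F]

lemma myQuotEst {f : ℂ → F} {R M : ℝ} (hR : 0 < R)
    (hd : DifferentiableOn ℂ f (ball (0:ℂ) R))
    (hM : ∀ w ∈ ball (0:ℂ) R, ‖f w‖ ≤ M) {s : ℂ} (hs : s ≠ 0) (hsR : ‖s‖ < R / 2) :
    ‖s⁻¹ • (f s - f 0) - deriv f 0‖ ≤ 16 * M * ‖s‖ / R ^ 2 := by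
  have hM0 : 0 ≤ M := le_trans (norm_nonneg _) (hM 0 (by simpa using hR))
  set r := R / 2 with hr
  have hr0 : 0 < r := by positivity
  have hrR : r < R := by rw [hr]; linarith
  have hmem : (0:ℂ) ∈ ball (0:ℂ) R := by simpa using hR
  have hnhds : ball (0:ℂ) R ∈ 𝓝 (0:ℂ) := isOpen_ball.mem_nhds hmem
  set g1 := dslope f 0 with hg1def
  have hg1 : DifferentiableOn ℂ g1 (ball (0:ℂ) R) :=
    (Complex.differentiableOn_dslope hnhds).mpr hd
  set g2 := dslope g1 0 with hg2def
  have hg2 : DifferentiableOn ℂ g2 (ball (0:ℂ) R) :=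
    (Complex.differentiableOn_dslope hnhds).mpr hg1
  have hclos : closure (ball (0:ℂ) r) ⊆ ball (0:ℂ) R := by
    rw [closure_ball _ hr0.ne']
    exact closedBall_subset_ball hrR
  -- maximum modulus bound helper
  have maxmod : ∀ (g : ℂ → F) (C : ℝ), DifferentiableOn ℂ g (ball (0:ℂ) R) →
      (∀ w ∈ sphere (0:ℂ) r, ‖g w‖ ≤ C) → ∀ z ∈ closedBall (0:ℂ) r, ‖g z‖ ≤ C := by
    intro g C hg hC z hz
    have hdc : DiffContOnCl ℂ g (ball (0:ℂ) r) := (hg.mono hclos).diffContOnCl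
    refine Complex.norm_le_of_forall_mem_frontier_norm_le isBounded_ball hdc ?_ ?_
    · intro w hw
      rw [frontier_ball _ hr0.ne'] at hw
      exact hC w hw
    · rw [closure_ball _ hr0.ne']; exact hz
  have hsphere_mem : ∀ w : ℂ, w ∈ sphere (0:ℂ) r → w ∈ ball (0:ℂ) R ∧ ‖w‖ = r ∧ w ≠ 0 := by
    intro w hw
    have hwn : ‖w‖ = r := by simpa using hw
    have hwne : w ≠ 0 := by
      intro h; rw [h, norm_zero] at hwn; exact hr0.ne hwn
    exact ⟨by simpa [mem_ball, dist_eq_norm, hwn] using hrR, hwn, hwne⟩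
  have hg1_sphere : ∀ w ∈ sphere (0:ℂ) r, ‖g1 w‖ ≤ 2 * M / r := by
    intro w hw
    obtain ⟨hwB, hwn, hwne⟩ := hsphere_mem w hw
    rw [hg1def, dslope_of_ne _ hwne, slope_def_module]
    rw [norm_smul, norm_inv, sub_zero, hwn]
    rw [div_eq_inv_mul]
    gcongr
    calc ‖f w - f 0‖ ≤ ‖f w‖ + ‖f 0‖ := norm_sub_le _ _
    _ ≤ M + M := add_le_add (hM w hwB) (hM 0 hmem)
    _ = 2 * M := by ring
  have hg1_ball : ∀ z ∈ closedBall (0:ℂ) r, ‖g1 z‖ ≤ 2 * M / r :=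
    maxmod g1 _ hg1 hg1_sphere
  have hg1_0 : ‖g1 0‖ ≤ 2 * M / r := hg1_ball 0 (by simpa using hr0.le)
  have hg2_sphere : ∀ w ∈ sphere (0:ℂ) r, ‖g2 w‖ ≤ 4 * M / r ^ 2 := by
    intro w hw
    obtain ⟨hwB, hwn, hwne⟩ := hsphere_mem w hw
    rw [hg2def, dslope_of_ne _ hwne, slope_def_module, norm_smul, norm_inv, sub_zero, hwn]
    have h1 : ‖g1 w - g1 0‖ ≤ 2 * M / r + 2 * M / r :=
      le_trans (norm_sub_le _ _)
        (add_le_add (hg1_ball w (sphere_subset_closedBall hw)) hg1_0)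
    calc r⁻¹ * ‖g1 w - g1 0‖ ≤ r⁻¹ * (2 * M / r + 2 * M / r) := by
          gcongr
    _ = 4 * M / r ^ 2 := by field_simp; ring
  have hg2_ball := maxmod g2 _ hg2 hg2_sphere
  have hsmem : s ∈ closedBall (0:ℂ) r := by
    simp only [mem_closedBall, dist_zero_right]
    linarith
  have key : ‖g2 s‖ ≤ 4 * M / r ^ 2 := hg2_ball s hsmem
  have hexp : s • g2 s = s⁻¹ • (f s - f 0) - deriv f 0 := by
    rw [hg2def, dslope_of_ne _ hs, slope_def_module, sub_zero, smul_smul,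
      mul_inv_cancel₀ hs, one_smul, hg1def, dslope_of_ne _ hs, slope_def_module, sub_zero,
      dslope_same]
  calc ‖s⁻¹ • (f s - f 0) - deriv f 0‖ = ‖s • g2 s‖ := by rw [hexp]
  _ = ‖s‖ * ‖g2 s‖ := norm_smul _ _
  _ ≤ ‖s‖ * (4 * M / r ^ 2) := by gcongr
  _ = 16 * M * ‖s‖ / R ^ 2 := by rw [hr]; field_simp; ring


/-- Core uniform-convergence lemma: difference quotients in direction `e` converge
uniformly to `z ↦ fderiv ℂ Fn z e` on a small ball around any point of `V`. -/
lemma myUnifConv {Fn : E → F} {V : Set E} (hV : IsOpen V) (hd : DifferentiableOn ℂ Fn V)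
    (e : E) {z₀ : E} (hz₀ : z₀ ∈ V) :
    ∃ δ > 0, ∃ R > 0, ball z₀ δ ⊆ V ∧
      TendstoUniformlyOn (fun (s : ℂ) z => s⁻¹ • (Fn (z + s • e) - Fn z))
        (fun z => fderiv ℂ Fn z e) (𝓝[≠] (0:ℂ)) (ball z₀ δ) ∧
      (∀ s : ℂ, ‖s‖ < R → ∀ z ∈ ball z₀ δ, z + s • e ∈ V) := by
  -- choose ρ with ball z₀ ρ ⊆ V and boundedness of Fn there
  obtain ⟨ρ₁, hρ₁, hball₁⟩ := Metric.isOpen_iff.mp hV z₀ hz₀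
  have hcont : ContinuousAt Fn z₀ := (hd.continuousOn.continuousAt (hV.mem_nhds hz₀))
  obtain ⟨ρ₂, hρ₂, hbd'⟩ := Metric.continuousAt_iff.mp hcont 1 one_pos
  set ρ := min ρ₁ ρ₂ with hρdef
  have hρ : 0 < ρ := lt_min hρ₁ hρ₂
  set M := ‖Fn z₀‖ + 1 with hMdef
  have hM0 : 0 < M := by positivity
  have hball : ball z₀ ρ ⊆ V := (ball_subset_ball (min_le_left _ _)).trans hball₁
  have hbd : ∀ z ∈ ball z₀ ρ, ‖Fn z‖ ≤ M := by
    intro z hz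
    have : dist (Fn z) (Fn z₀) < 1 := hbd' (lt_of_lt_of_le (mem_ball.mp hz) (min_le_right _ _))
    calc ‖Fn z‖ = ‖Fn z₀ + (Fn z - Fn z₀)‖ := by congr 1; abel
    _ ≤ ‖Fn z₀‖ + ‖Fn z - Fn z₀‖ := norm_add_le _ _
    _ ≤ ‖Fn z₀‖ + 1 := by
        rw [dist_eq_norm] at this; linarith
  set R := ρ / (2 * (‖e‖ + 1)) with hRdef
  have hR : 0 < R := by positivity
  set δ := ρ / 4 with hδdef
  have hδ : 0 < δ := by positivity
  have hin : ∀ (z : E), z ∈ ball z₀ δ → ∀ (w : ℂ), ‖w‖ < R → z + w • e ∈ ball z₀ ρ := by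
    intro z hz w hw
    have h1 : ‖z - z₀‖ < δ := by rw [← dist_eq_norm]; exact hz
    have h2 : ‖w • e‖ = ‖w‖ * ‖e‖ := norm_smul _ _
    have h3 : ‖w‖ * ‖e‖ ≤ R * ‖e‖ := by
      apply mul_le_mul_of_nonneg_right hw.le (norm_nonneg _)
    have h4 : R * ‖e‖ ≤ ρ / 2 := by
      rw [hRdef]
      rw [div_mul_eq_mul_div, div_le_div_iff₀ (by positivity) (by norm_num)]
      have : 0 ≤ ρ * ‖e‖ := by positivity
      nlinarith [norm_nonneg e, hρ.le]
    have : ‖z + w • e - z₀‖ ≤ ‖z - z₀‖ + ‖w • e‖ := by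
      calc ‖z + w • e - z₀‖ = ‖(z - z₀) + w • e‖ := by congr 1; abel
      _ ≤ ‖z - z₀‖ + ‖w • e‖ := norm_add_le _ _
    rw [mem_ball, dist_eq_norm]
    have hδρ : δ + ρ / 2 < ρ := by rw [hδdef]; linarith
    calc ‖z + w • e - z₀‖ ≤ ‖z - z₀‖ + ‖w • e‖ := this
    _ < δ + ρ / 2 := by rw [h2]; linarith
    _ < ρ := hδρ
  -- slice functions
  have hslice : ∀ z ∈ ball z₀ δ,
      DifferentiableOn ℂ (fun w : ℂ => Fn (z + w • e)) (ball (0:ℂ) R) ∧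
      (∀ w ∈ ball (0:ℂ) R, ‖Fn (z + w • e)‖ ≤ M) ∧
      deriv (fun w : ℂ => Fn (z + w • e)) 0 = fderiv ℂ Fn z e := by
    intro z hz
    have hmap : ∀ w ∈ ball (0:ℂ) R, z + w • e ∈ ball z₀ ρ := by
      intro w hw
      exact hin z hz w (by simpa [dist_eq_norm] using hw)
    have haff : Differentiable ℂ (fun w : ℂ => z + w • e) := by
      apply Differentiable.const_add
      exact (differentiable_id.smul_const e)
    refine ⟨?_, fun w hw => hbd _ (hmap w hw), ?_⟩
    · exact (hd.mono hball).comp haff.differentiableOn (fun w hw => hmap w hw)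
    · have hz' : z ∈ V := hball (by simpa [mem_ball, dist_self, hρ] using
        (lt_of_lt_of_le (mem_ball.mp hz) (by rw [hδdef]; linarith)))
      have hFz : DifferentiableAt ℂ Fn z := hd.differentiableAt (hV.mem_nhds hz')
      have haffd : HasDerivAt (fun w : ℂ => z + w • e) e 0 := by
        simpa using ((hasDerivAt_id (0:ℂ)).smul_const e).const_add z
      have hFz' : HasFDerivAt Fn (fderiv ℂ Fn z) (z + (0:ℂ) • e) := by
        simpa using hFz.hasFDerivAt
      have : HasDerivAt (fun w : ℂ => Fn (z + w • e)) (fderiv ℂ Fn z e) 0 := by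
        have := hFz'.comp_hasDerivAt 0 haffd
        exact this
      exact this.deriv
  refine ⟨δ, hδ, R, hR, (ball_subset_ball (by rw [hδdef]; linarith)).trans hball, ?_, ?_⟩
  · rw [Metric.tendstoUniformlyOn_iff]
    intro ε hε
    have hη : 0 < min (R / 2) (ε * R ^ 2 / (16 * M + 1)) := by positivity
    have hev : ∀ᶠ s in 𝓝[≠] (0:ℂ), s ≠ 0 ∧ ‖s‖ < min (R / 2) (ε * R ^ 2 / (16 * M + 1)) := by
      filter_upwards [self_mem_nhdsWithin,
        eventually_nhdsWithin_of_eventually_nhds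
          (Metric.eventually_nhds_iff.mpr ⟨_, hη, fun {y} hy => by
            simpa [dist_eq_norm] using hy⟩)] with s h1 h2
      exact ⟨h1, by simpa [dist_eq_norm] using h2⟩
    filter_upwards [hev] with s ⟨hs0, hsn⟩ z hz
    obtain ⟨hd1, hb1, hder⟩ := hslice z hz
    have est := myQuotEst hR hd1 hb1 hs0 (lt_of_lt_of_le hsn (min_le_left _ _))
    rw [dist_eq_norm]
    simp only [zero_smul, add_zero, hder] at est
    have : 16 * M * ‖s‖ / R ^ 2 < ε := by
      have hsn2 : ‖s‖ < ε * R ^ 2 / (16 * M + 1) := lt_of_lt_of_le hsn (min_le_right _ _)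
      rw [div_lt_iff₀ (by positivity)]
      have h16 : (0:ℝ) < 16 * M + 1 := by positivity
      calc 16 * M * ‖s‖ ≤ (16 * M + 1) * ‖s‖ := by nlinarith [norm_nonneg s]
      _ < (16 * M + 1) * (ε * R ^ 2 / (16 * M + 1)) := by
          apply mul_lt_mul_of_pos_left hsn2 h16
      _ = ε * R ^ 2 := by field_simp
    calc ‖fderiv ℂ Fn z e - s⁻¹ • (Fn (z + s • e) - Fn z)‖
        = ‖s⁻¹ • (Fn (z + s • e) - Fn z) - fderiv ℂ Fn z e‖ := norm_sub_rev _ _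
    _ ≤ 16 * M * ‖s‖ / R ^ 2 := est
    _ < ε := this
  · intro s hs z hz
    exact hball (hin z hz s hs)

/-- Continuity of directional derivative of a holomorphic function. -/
lemma myFderivCont {Fn : E → F} {V : Set E} (hV : IsOpen V) (hd : DifferentiableOn ℂ Fn V)
    (e : E) : ContinuousOn (fun z => fderiv ℂ Fn z e) V := by
  intro z₀ hz₀
  obtain ⟨δ, hδ, R, hR, hballV, hconv, hinV⟩ := myUnifConv hV hd e hz₀
  have hQcont : ∀ᶠ s in 𝓝[≠] (0:ℂ), ContinuousOn
      (fun z => s⁻¹ • (Fn (z + s • e) - Fn z)) (ball z₀ δ) := by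
    have hev : ∀ᶠ s in 𝓝[≠] (0:ℂ), ‖s‖ < R := by
      apply eventually_nhdsWithin_of_eventually_nhds
      exact Metric.eventually_nhds_iff.mpr ⟨R, hR, fun {y} hy => by
        simpa [dist_eq_norm] using hy⟩
    filter_upwards [hev] with s hs
    apply ContinuousOn.const_smul
    apply ContinuousOn.sub
    · apply hd.continuousOn.comp (Continuous.continuousOn (by continuity))
      intro z hz
      exact hinV s hs z hz
    · exact hd.continuousOn.mono hballV
  have := (hconv.continuousOn hQcont.frequently)
  exact (this.continuousAt (isOpen_ball.mem_nhds (mem_ball_self hδ))).continuousWithinAt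

/-- Differentiability along complex lines of directional derivatives of a holomorphic
function. -/
lemma myFderivSliceDiff {Fn : E → F} {V : Set E} (hV : IsOpen V) (hd : DifferentiableOn ℂ Fn V)
    (e : E) (z₀ : E) (v : E) {t₀ : ℂ} (ht₀ : z₀ + t₀ • v ∈ V) :
    DifferentiableAt ℂ (fun t : ℂ => fderiv ℂ Fn (z₀ + t • v) e) t₀ := by
  obtain ⟨δ, hδ, R, hR, hballV, hconv, hinV⟩ := myUnifConv hV hd e ht₀
  set aff : ℂ → E := fun t => z₀ + t • v with haffdef
  have haffc : Continuous aff := by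
    apply Continuous.add continuous_const
    exact continuous_id.smul continuous_const
  set D : Set ℂ := aff ⁻¹' (ball (z₀ + t₀ • v) δ) with hDdef
  have hDopen : IsOpen D := isOpen_ball.preimage haffc
  have ht₀D : t₀ ∈ D := by
    simp only [hDdef, mem_preimage]
    exact mem_ball_self hδ
  have hcomp : TendstoUniformlyOn
      (fun (s : ℂ) t => s⁻¹ • (Fn (aff t + s • e) - Fn (aff t)))
      (fun t => fderiv ℂ Fn (aff t) e) (𝓝[≠] (0:ℂ)) D := hconv.comp aff
  have hQdiff : ∀ᶠ s in 𝓝[≠] (0:ℂ), DifferentiableOn ℂ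
      (fun t => s⁻¹ • (Fn (aff t + s • e) - Fn (aff t))) D := by
    have hev : ∀ᶠ s in 𝓝[≠] (0:ℂ), ‖s‖ < R := by
      apply eventually_nhdsWithin_of_eventually_nhds
      exact Metric.eventually_nhds_iff.mpr ⟨R, hR, fun {y} hy => by
        simpa [dist_eq_norm] using hy⟩
    filter_upwards [hev] with s hs
    have haffd : Differentiable ℂ aff := by
      apply Differentiable.const_add
      exact differentiable_id.smul_const v
    apply DifferentiableOn.const_smul
    apply DifferentiableOn.sub
    · apply hd.comp
      · exact (haffd.add_const (s • e)).differentiableOn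
      · intro t ht
        exact hinV s hs (aff t) ht
    · apply hd.comp haffd.differentiableOn
      intro t ht
      exact hballV ht
  have hdiff : DifferentiableOn ℂ (fun t => fderiv ℂ Fn (aff t) e) D :=
    (hcomp.tendstoLocallyUniformlyOn).differentiableOn hQdiff hDopen
  exact (hdiff.differentiableAt (hDopen.mem_nhds ht₀D))

/-- Identity principle on a ball, via one-variable slices. -/
lemma myBallIdentity {g : E → ℂ} {c : E} {r : ℝ} (hr : 0 < r)
    (hslice : ∀ u : E, DifferentiableOn ℂ (fun t : ℂ => g (c + t • u))
      {t : ℂ | c + t • u ∈ ball c r})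
    (h0 : g =ᶠ[𝓝 c] 0) : EqOn g 0 (ball c r) := by
  intro w hw
  set u := w - c with hu
  rcases eq_or_ne u 0 with h | h
  · have : w = c := by rwa [sub_eq_zero] at h
    rw [this]
    exact h0.self_of_nhds
  have hun : 0 < ‖u‖ := norm_pos_iff.mpr h
  set T : Set ℂ := {t : ℂ | c + t • u ∈ ball c r} with hT
  have hTball : T = ball (0:ℂ) (r / ‖u‖) := by
    ext t
    simp only [hT, mem_setOf_eq, mem_ball, dist_eq_norm]
    rw [add_sub_cancel_left, norm_smul, lt_div_iff₀ hun]
    simp [mul_comm]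
  have hTpre : IsPreconnected T := by
    rw [hTball]; exact (convex_ball _ _).isPreconnected
  have hTopen : IsOpen T := by rw [hTball]; exact isOpen_ball
  have h0T : (0:ℂ) ∈ T := by
    simp only [hT, mem_setOf_eq, zero_smul, add_zero]
    exact mem_ball_self hr
  have h1T : (1:ℂ) ∈ T := by
    simp only [hT, mem_setOf_eq, one_smul, hu]
    simpa using hw
  have hφan : AnalyticOnNhd ℂ (fun t : ℂ => g (c + t • u)) T :=
    (hslice u).analyticOnNhd hTopen
  have hφ0 : (fun t : ℂ => g (c + t • u)) =ᶠ[𝓝 (0:ℂ)] 0 := by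
    have hcont : Continuous (fun t : ℂ => c + t • u) :=
      continuous_const.add (continuous_id.smul continuous_const)
    have : Tendsto (fun t : ℂ => c + t • u) (𝓝 0) (𝓝 c) := by
      have := hcont.tendsto 0
      simpa using this
    exact this.eventually h0
  have := hφan.eqOn_zero_of_preconnected_of_eventuallyEq_zero hTpre h0T hφ0
  have h1 := this h1T
  simpa [hu] using h1

/-- Identity principle on a connected open set, from slice differentiability. -/
lemma myDensity {g : E → ℂ} {Ω : Set E} (hΩ : IsOpen Ω) (hconn : IsPreconnected Ω)
    (hslice : ∀ z₀ u : E, DifferentiableOn ℂ (fun t : ℂ => g (z₀ + t • u))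
      {t : ℂ | z₀ + t • u ∈ Ω})
    {q₀ : E} (hq₀ : q₀ ∈ Ω) (hg₀ : g q₀ ≠ 0) :
    ∀ q ∈ Ω, q ∈ closure {x ∈ Ω | g x ≠ 0} := by
  -- the set where g vanishes locally
  set A : Set E := {q ∈ Ω | g =ᶠ[𝓝 q] 0} with hA
  have hAopen : IsOpen A := by
    rw [isOpen_iff_mem_nhds]
    rintro q ⟨hqΩ, hq⟩
    have h1 : {x | g =ᶠ[𝓝 x] 0} ∈ 𝓝 q := hq.eventually_nhds
    filter_upwards [h1, hΩ.mem_nhds hqΩ] with x hx hxΩ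
    exact ⟨hxΩ, hx⟩
  -- ball version of hslice
  have hball_id : ∀ (a : E) (ρ : ℝ), 0 < ρ → ball a ρ ⊆ Ω → g =ᶠ[𝓝 a] 0 →
      EqOn g 0 (ball a ρ) := by
    intro a ρ hρ hsub h0
    apply myBallIdentity hρ _ h0
    intro u
    apply (hslice a u).mono
    intro t ht
    exact hsub ht
  -- A is closed in Ω
  have hclosed : ∀ q ∈ Ω, q ∈ closure A → q ∈ A := by
    intro q hqΩ hqcl
    obtain ⟨ρ, hρ, hsub⟩ := Metric.isOpen_iff.mp hΩ q hqΩ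
    obtain ⟨a, haA, hadist⟩ := Metric.mem_closure_iff.mp hqcl (ρ / 2) (by positivity)
    have haΩ : ball a (ρ / 2) ⊆ Ω := by
      intro x hx
      apply hsub
      rw [mem_ball] at *
      calc dist x q ≤ dist x a + dist a q := dist_triangle _ _ _
      _ < ρ / 2 + ρ / 2 := add_lt_add hx (by rwa [dist_comm])
      _ = ρ := by ring
    have := hball_id a (ρ / 2) (by positivity) haΩ haA.2
    have hqball : q ∈ ball a (ρ / 2) := by
      rw [mem_ball]; exact hadist
    refine ⟨hqΩ, ?_⟩
    filter_upwards [isOpen_ball.mem_nhds hqball] with x hx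
    exact this hx
  -- A is empty
  have hAempty : A = ∅ := by
    by_contra hne
    obtain ⟨a, ha⟩ := Set.nonempty_iff_ne_empty.mpr hne
    have hsub : Ω ⊆ A :=
      hconn.subset_left_of_subset_union hAopen (hΩ.sdiff isClosed_closure)
        (disjoint_sdiff_right.mono_left subset_closure)
        (fun q hq => by
          by_cases h : q ∈ closure A
          · exact Or.inl (hclosed q hq h)
          · exact Or.inr ⟨hq, h⟩)
        ⟨a, ha.1, ha⟩
    exact hg₀ ((hsub hq₀).2.self_of_nhds)
  intro q hq
  rw [_root_.mem_closure_iff]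
  intro o ho hqo
  by_contra hemp
  have : g =ᶠ[𝓝 q] 0 := by
    filter_upwards [ho.mem_nhds hqo, hΩ.mem_nhds hq] with x hx hxΩ
    by_contra hgx
    exact hemp ⟨x, hx, hxΩ, hgx⟩
  have : q ∈ A := ⟨hq, this⟩
  rw [hAempty] at this
  exact this

end AuxiliaryAnalysis

section AuxiliaryAlgebra
open Matrix Set Submodule
lemma myExistsDet {ι n : Type*} [Fintype ι] [Fintype n] [DecidableEq ι] [DecidableEq n]
    (v : ι → n → ℂ) (hv : LinearIndependent ℂ v) :
    ∃ c : ι → n, (Matrix.of fun i i' => v i (c i')).det ≠ 0 := by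
  classical
  set M : Matrix ι n ℂ := Matrix.of v with hM
  have hrank : M.rank = Fintype.card ι := hv.rank_matrix
  have hspan : span ℂ (Set.range Mᵀ) = ⊤ := by
    apply Submodule.eq_top_of_finrank_eq
    rw [show Set.range Mᵀ = Set.range M.col from rfl, ← Matrix.rank_eq_finrank_span_cols, hrank, Module.finrank_pi]
  obtain ⟨b, hbsub, hbspan, hbind⟩ := exists_linearIndependent ℂ (Set.range Mᵀ)
  rw [hspan] at hbspan
  have hbfin : b.Finite := hbind.setFinite
  have hbas : Module.Basis b ℂ (ι → ℂ) := Module.Basis.mk hbind (by rw [← hbspan]; exact le_of_eq (by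
    rw [Subtype.range_coe]))
  haveI : Fintype b := hbfin.fintype
  have hcard : Fintype.card b = Fintype.card ι := by
    have := Module.finrank_eq_card_basis hbas
    rw [Module.finrank_pi] at this
    omega
  have e : ι ≃ b := (Fintype.equivOfCardEq hcard).symm
  choose cfun hcfun using fun (x : b) => hbsub x.2
  set c : ι → n := fun i => cfun (e i) with hc
  refine ⟨c, ?_⟩
  have hcols : ∀ i' : ι, (fun i => v i (c i')) = (e i' : ι → ℂ) := by
    intro i'
    have := hcfun (e i')
    funext i
    rw [← this]
    rfl
  set B : Matrix ι ι ℂ := Matrix.of fun i i' => v i (c i') with hB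
  have hBcols : LinearIndependent ℂ (fun i' => Bᵀ i') := by
    have : (fun i' => Bᵀ i') = (fun i' => ((e i' : ι → ℂ))) := by
      funext i'
      exact hcols i'
    rw [this]
    exact hbind.comp e e.injective
  have hunit : IsUnit B := linearIndependent_cols_iff_isUnit.mp hBcols
  have := Matrix.isUnit_iff_isUnit_det B |>.mp hunit
  exact this.ne_zero

end AuxiliaryAlgebra

section
variable {m : ℕ}

open ContinuousLinearMap

lemma myHasFDerivFibLin {Xi : (Fin m → ℂ) → (Fin m → ℂ)} {q : (Fin m → ℂ) × (Fin m → ℂ)}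
    (h : DifferentiableAt ℂ Xi q.1) :
    HasFDerivAt (fibLin Xi)
      (∑ j, (q.2 j • ((proj j).comp ((fderiv ℂ Xi q.1).comp
          (fst ℂ (Fin m → ℂ) (Fin m → ℂ)))) +
        Xi q.1 j • ((proj j).comp (snd ℂ (Fin m → ℂ) (Fin m → ℂ))))) q := by
  have : fibLin Xi = fun q' : (Fin m → ℂ) × (Fin m → ℂ) => ∑ j, q'.2 j * Xi q'.1 j := rfl
  rw [this]
  apply HasFDerivAt.fun_sum
  intro j _
  have hc : HasFDerivAt (fun q' : (Fin m → ℂ) × (Fin m → ℂ) => q'.2 j)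
      ((proj j).comp (snd ℂ (Fin m → ℂ) (Fin m → ℂ))) q :=
    ((proj j).comp (snd ℂ (Fin m → ℂ) (Fin m → ℂ))).hasFDerivAt
  have hfst : HasFDerivAt (fun q' : (Fin m → ℂ) × (Fin m → ℂ) => q'.1)
      (fst ℂ (Fin m → ℂ) (Fin m → ℂ)) q := (fst ℂ (Fin m → ℂ) (Fin m → ℂ)).hasFDerivAt
  have hXiq : HasFDerivAt Xi (fderiv ℂ Xi q.1) q.1 := h.hasFDerivAt
  have hd : HasFDerivAt (fun q' : (Fin m → ℂ) × (Fin m → ℂ) => Xi q'.1 j)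
      ((proj j).comp ((fderiv ℂ Xi q.1).comp (fst ℂ (Fin m → ℂ) (Fin m → ℂ)))) q := by
    have h1 : HasFDerivAt (fun q' : (Fin m → ℂ) × (Fin m → ℂ) => Xi q'.1)
        ((fderiv ℂ Xi q.1).comp (fst ℂ (Fin m → ℂ) (Fin m → ℂ))) q := hXiq.comp q hfst
    exact (proj (R := ℂ) (φ := fun _ : Fin m => ℂ) j).hasFDerivAt.comp q h1
  simpa [mul_comm] using hc.fun_mul hd

lemma myFibLinEntries {Xi : (Fin m → ℂ) → (Fin m → ℂ)} {q : (Fin m → ℂ) × (Fin m → ℂ)}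
    (h : DifferentiableAt ℂ Xi q.1) :
    (∀ j₀, fderiv ℂ (fibLin Xi) q (basis2 (Sum.inl j₀)) =
      ∑ j, q.2 j * fderiv ℂ Xi q.1 (Pi.single j₀ 1) j) ∧
    (∀ j₀, fderiv ℂ (fibLin Xi) q (basis2 (Sum.inr j₀)) = Xi q.1 j₀) := by
  have hD := (myHasFDerivFibLin h).fderiv
  constructor
  · intro j₀
    rw [hD]
    simp [basis2, ContinuousLinearMap.sum_apply]
  · intro j₀
    rw [hD]
    simp only [basis2, ContinuousLinearMap.sum_apply, ContinuousLinearMap.add_apply,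
      ContinuousLinearMap.smul_apply, ContinuousLinearMap.comp_apply,
      ContinuousLinearMap.coe_fst', ContinuousLinearMap.coe_snd',
      ContinuousLinearMap.proj_apply, map_zero]
    rw [Finset.sum_eq_single j₀]
    · simp
    · intro b _ hb
      simp [Pi.single_eq_of_ne hb]
    · intro hj₀
      exact absurd (Finset.mem_univ j₀) hj₀

lemma myHasFDerivPi {fj : (Fin m → ℂ) → ℂ} {q : (Fin m → ℂ) × (Fin m → ℂ)}
    (h : DifferentiableAt ℂ fj q.1) :
    HasFDerivAt (fun q' : (Fin m → ℂ) × (Fin m → ℂ) => fj q'.1)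
      ((fderiv ℂ fj q.1).comp (fst ℂ (Fin m → ℂ) (Fin m → ℂ))) q :=
  h.hasFDerivAt.comp q (fst ℂ (Fin m → ℂ) (Fin m → ℂ)).hasFDerivAt

lemma myPiEntries {fj : (Fin m → ℂ) → ℂ} {q : (Fin m → ℂ) × (Fin m → ℂ)}
    (h : DifferentiableAt ℂ fj q.1) :
    (∀ j₀, fderiv ℂ (fun q' : (Fin m → ℂ) × (Fin m → ℂ) => fj q'.1) q (basis2 (Sum.inl j₀)) =
      fderiv ℂ fj q.1 (Pi.single j₀ 1)) ∧
    (∀ j₀, fderiv ℂ (fun q' : (Fin m → ℂ) × (Fin m → ℂ) => fj q'.1) q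
      (basis2 (Sum.inr j₀)) = 0) := by
  have hD := (myHasFDerivPi h).fderiv
  exact ⟨fun j₀ => by rw [hD]; simp [basis2], fun j₀ => by rw [hD]; simp [basis2]⟩

end

open Metric Filter Topology in
/-- Proposition 2.1, independence almost everywhere: if `U` is connected and
the independence condition of Statement 4 holds at one point `x₀ ∈ U`, then the set of points
of `U × ℂ^m` where the differentials `dH₁,…,dH_m` are linearly independent is open and dense
in `U × ℂ^m`. -/
theorem lifted_functions_independent_ae {m k l : ℕ} (hkl : k + l = m)
    (U : Set (Fin m → ℂ)) (hU : IsOpen U) (hconn : IsConnected U)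
    (X : Fin k → (Fin m → ℂ) → (Fin m → ℂ))
    (f : Fin l → (Fin m → ℂ) → ℂ)
    (hX : ∀ i, DifferentiableOn ℂ (X i) U)
    (hf : ∀ j, DifferentiableOn ℂ (f j) U)
    (x₀ : Fin m → ℂ) (hx₀ : x₀ ∈ U)
    (hXind : LinearIndependent ℂ fun i => X i x₀)
    (hfind : LinearIndependent ℂ fun j => fderiv ℂ (f j) x₀)
    (H : Fin k ⊕ Fin l → (Fin m → ℂ) × (Fin m → ℂ) → ℂ)
    (hH1 : ∀ i, H (Sum.inl i) = fibLin (X i))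
    (hH2 : ∀ j, H (Sum.inr j) = fun q => f j q.1) :
    IsOpen {q : (Fin m → ℂ) × (Fin m → ℂ) |
        q.1 ∈ U ∧ LinearIndependent ℂ fun a => fderiv ℂ (H a) q} ∧
    U ×ˢ (Set.univ : Set (Fin m → ℂ)) ⊆
      closure {q : (Fin m → ℂ) × (Fin m → ℂ) |
        q.1 ∈ U ∧ LinearIndependent ℂ fun a => fderiv ℂ (H a) q} := by
  classical
  set Ω : Set ((Fin m → ℂ) × (Fin m → ℂ)) := U ×ˢ (Set.univ : Set (Fin m → ℂ)) with hΩdef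
  have hΩopen : IsOpen Ω := hU.prod isOpen_univ
  have hΩmem : ∀ {q : (Fin m → ℂ) × (Fin m → ℂ)}, q ∈ Ω ↔ q.1 ∈ U := by
    intro q; simp [hΩdef]
  have hXat : ∀ i (z : Fin m → ℂ), z ∈ U → DifferentiableAt ℂ (X i) z :=
    fun i z hz => (hX i).differentiableAt (hU.mem_nhds hz)
  have hfat : ∀ j (z : Fin m → ℂ), z ∈ U → DifferentiableAt ℂ (f j) z :=
    fun j z hz => (hf j).differentiableAt (hU.mem_nhds hz)
  -- entry formulas on Ω
  have hE1 : ∀ i j₀ (q : (Fin m → ℂ) × (Fin m → ℂ)), q.1 ∈ U →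
      fderiv ℂ (H (Sum.inl i)) q (basis2 (Sum.inl j₀)) =
      ∑ j, q.2 j * fderiv ℂ (X i) q.1 (Pi.single j₀ 1) j := by
    intro i j₀ q hq; rw [hH1 i]; exact (myFibLinEntries (hXat i _ hq)).1 j₀
  have hE2 : ∀ i j₀ (q : (Fin m → ℂ) × (Fin m → ℂ)), q.1 ∈ U →
      fderiv ℂ (H (Sum.inl i)) q (basis2 (Sum.inr j₀)) = X i q.1 j₀ := by
    intro i j₀ q hq; rw [hH1 i]; exact (myFibLinEntries (hXat i _ hq)).2 j₀
  have hE3 : ∀ j j₀ (q : (Fin m → ℂ) × (Fin m → ℂ)), q.1 ∈ U →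
      fderiv ℂ (H (Sum.inr j)) q (basis2 (Sum.inl j₀)) =
      fderiv ℂ (f j) q.1 (Pi.single j₀ 1) := by
    intro j j₀ q hq; rw [hH2 j]; exact (myPiEntries (hfat j _ hq)).1 j₀
  have hE4 : ∀ j j₀ (q : (Fin m → ℂ) × (Fin m → ℂ)), q.1 ∈ U →
      fderiv ℂ (H (Sum.inr j)) q (basis2 (Sum.inr j₀)) = 0 := by
    intro j j₀ q hq; rw [hH2 j]; exact (myPiEntries (hfat j _ hq)).2 j₀
  -- continuity of entries on Ω
  have hfstMapsTo : ∀ {q : (Fin m → ℂ) × (Fin m → ℂ)}, q ∈ Ω → q.1 ∈ U :=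
    fun {q} hq => hΩmem.mp hq
  have hEntCont : ∀ (a : Fin k ⊕ Fin l) (b : Fin m ⊕ Fin m),
      ContinuousOn (fun q : (Fin m → ℂ) × (Fin m → ℂ) =>
        fderiv ℂ (H a) q (basis2 b)) Ω := by
    rintro (i | j) (j₀ | j₀)
    · apply ContinuousOn.congr (s := Ω)
        (f := fun q : (Fin m → ℂ) × (Fin m → ℂ) =>
          ∑ j, q.2 j * fderiv ℂ (X i) q.1 (Pi.single j₀ 1) j)
      · apply continuousOn_finset_sum
        intro j _
        apply ContinuousOn.mul
        · exact ((continuous_apply j).comp continuous_snd).continuousOn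
        · exact (continuous_apply j).comp_continuousOn
            ((myFderivCont hU (hX i) (Pi.single j₀ 1)).comp
              continuous_fst.continuousOn (fun q hq => hfstMapsTo hq))
      · intro q hq; exact hE1 i j₀ q (hfstMapsTo hq)
    · apply ContinuousOn.congr (s := Ω)
        (f := fun q : (Fin m → ℂ) × (Fin m → ℂ) => X i q.1 j₀)
      · exact (continuous_apply j₀).comp_continuousOn
          ((hX i).continuousOn.comp continuous_fst.continuousOn (fun q hq => hfstMapsTo hq))
      · intro q hq; exact hE2 i j₀ q (hfstMapsTo hq)
    · apply ContinuousOn.congr (s := Ω)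
        (f := fun q : (Fin m → ℂ) × (Fin m → ℂ) => fderiv ℂ (f j) q.1 (Pi.single j₀ 1))
      · exact (myFderivCont hU (hf j) (Pi.single j₀ 1)).comp
          continuous_fst.continuousOn (fun q hq => hfstMapsTo hq)
      · intro q hq; exact hE3 j j₀ q (hfstMapsTo hq)
    · apply ContinuousOn.congr (s := Ω) (f := fun _ => (0:ℂ))
      · exact continuousOn_const
      · intro q hq; exact hE4 j j₀ q (hfstMapsTo hq)
  -- slice differentiability of entries
  have hEntSlice : ∀ (a : Fin k ⊕ Fin l) (b : Fin m ⊕ Fin m)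
      (q₀' w : (Fin m → ℂ) × (Fin m → ℂ)),
      DifferentiableOn ℂ (fun t : ℂ => fderiv ℂ (H a) (q₀' + t • w) (basis2 b))
        {t : ℂ | q₀' + t • w ∈ Ω} := by
    have hTmem : ∀ (q₀' w : (Fin m → ℂ) × (Fin m → ℂ)) {t : ℂ},
        t ∈ {t : ℂ | q₀' + t • w ∈ Ω} → q₀'.1 + t • w.1 ∈ U := by
      intro q₀' w t ht
      exact hfstMapsTo ht
    rintro (i | j) (j₀ | j₀) q₀' w
    · apply DifferentiableOn.congr (f := fun t : ℂ =>
        ∑ j, (q₀'.2 j + t * w.2 j) * fderiv ℂ (X i) (q₀'.1 + t • w.1) (Pi.single j₀ 1) j)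
      · apply DifferentiableOn.fun_sum
        intro j _
        apply DifferentiableOn.mul
        · exact ((differentiable_const _).add (differentiable_id.mul_const _)).differentiableOn
        · intro t ht
          have h1 := myFderivSliceDiff hU (hX i) (Pi.single j₀ 1) q₀'.1 w.1
            (hTmem q₀' w ht)
          exact ((differentiableAt_pi.mp h1) j).differentiableWithinAt
      · intro t ht
        rw [hE1 i j₀ _ (hTmem q₀' w ht)]
        rfl
    · apply DifferentiableOn.congr (f := fun t : ℂ => X i (q₀'.1 + t • w.1) j₀)
      · intro t ht
        have haff : DifferentiableAt ℂ (fun t : ℂ => q₀'.1 + t • w.1) t :=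
          (differentiableAt_const _).add (differentiableAt_id.smul_const w.1)
        have h1 : DifferentiableAt ℂ (fun t : ℂ => X i (q₀'.1 + t • w.1)) t :=
          (hXat i _ (hTmem q₀' w ht)).comp t haff
        exact ((differentiableAt_pi.mp h1) j₀).differentiableWithinAt
      · intro t ht
        rw [hE2 i j₀ _ (hTmem q₀' w ht)]
        rfl
    · apply DifferentiableOn.congr
        (f := fun t : ℂ => fderiv ℂ (f j) (q₀'.1 + t • w.1) (Pi.single j₀ 1))
      · intro t ht
        exact (myFderivSliceDiff hU (hf j) (Pi.single j₀ 1) q₀'.1 w.1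
          (hTmem q₀' w ht)).differentiableWithinAt
      · intro t ht
        rw [hE3 j j₀ _ (hTmem q₀' w ht)]
        rfl
    · apply DifferentiableOn.congr (f := fun _ => (0:ℂ))
      · exact differentiableOn_const _
      · intro t ht
        exact hE4 j j₀ _ (hTmem q₀' w ht)
  -- the injective evaluation map Φ
  set Φ : (((Fin m → ℂ) × (Fin m → ℂ)) →L[ℂ] ℂ) →ₗ[ℂ] ((Fin m ⊕ Fin m) → ℂ) :=
    LinearMap.pi (fun b => (ContinuousLinearMap.apply ℂ ℂ (basis2 b)).toLinearMap) with hΦdef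
  have hΦker : LinearMap.ker Φ = ⊥ := by
    rw [LinearMap.ker_eq_bot']
    intro L hL
    have h : ∀ b, L (basis2 b) = 0 := fun b => congrFun hL b
    set B2 : Module.Basis (Fin m ⊕ Fin m) ℂ ((Fin m → ℂ) × (Fin m → ℂ)) :=
      (Pi.basisFun ℂ (Fin m)).prod (Pi.basisFun ℂ (Fin m)) with hB2def
    have hB2 : ∀ b, B2 b = basis2 b := by
      rintro (j | j) <;> apply Prod.ext
      · rw [hB2def]; rw [Module.Basis.prod_apply_inl_fst]; simp [basis2]
      · rw [hB2def]; rw [Module.Basis.prod_apply_inl_snd]; simp [basis2]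
      · rw [hB2def]; rw [Module.Basis.prod_apply_inr_fst]; simp [basis2]
      · rw [hB2def]; rw [Module.Basis.prod_apply_inr_snd]; simp [basis2]
    have : (L : ((Fin m → ℂ) × (Fin m → ℂ)) →ₗ[ℂ] ℂ) = 0 := by
      apply B2.ext
      intro b
      rw [hB2 b]
      simpa using h b
    exact ContinuousLinearMap.coe_injective (this.trans (ContinuousLinearMap.coe_zero).symm)
  have hforward : ∀ q : (Fin m → ℂ) × (Fin m → ℂ),
      (LinearIndependent ℂ fun a => fderiv ℂ (H a) q) →
      LinearIndependent ℂ (fun a (b : Fin m ⊕ Fin m) => fderiv ℂ (H a) q (basis2 b)) := by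
    intro q hli
    exact hli.map' Φ hΦker
  have hbackward : ∀ (q : (Fin m → ℂ) × (Fin m → ℂ))
      (c : Fin k ⊕ Fin l → Fin m ⊕ Fin m),
      (Matrix.of fun a a' => fderiv ℂ (H a) q (basis2 (c a'))).det ≠ 0 →
      LinearIndependent ℂ fun a => fderiv ℂ (H a) q := by
    intro q c hdet
    have hunit : IsUnit (Matrix.of fun a a' => fderiv ℂ (H a) q (basis2 (c a'))) :=
      (Matrix.isUnit_iff_isUnit_det _).mpr (isUnit_iff_ne_zero.mpr hdet)
    have hrows := Matrix.linearIndependent_rows_iff_isUnit.mpr hunit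
    set Ψ : (((Fin m → ℂ) × (Fin m → ℂ)) →L[ℂ] ℂ) →ₗ[ℂ] ((Fin k ⊕ Fin l) → ℂ) :=
      LinearMap.pi (fun a' => (ContinuousLinearMap.apply ℂ ℂ (basis2 (c a'))).toLinearMap)
    exact LinearIndependent.of_comp Ψ hrows
  -- continuity and slice differentiability of determinants
  have hdetCont : ∀ (c : Fin k ⊕ Fin l → Fin m ⊕ Fin m), ContinuousOn
      (fun q : (Fin m → ℂ) × (Fin m → ℂ) =>
        (Matrix.of fun a a' => fderiv ℂ (H a) q (basis2 (c a'))).det) Ω := by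
    intro c
    have hmat : ContinuousOn (fun q : (Fin m → ℂ) × (Fin m → ℂ) =>
        (Matrix.of fun a a' => fderiv ℂ (H a) q (basis2 (c a'))
          : Matrix (Fin k ⊕ Fin l) (Fin k ⊕ Fin l) ℂ)) Ω := by
      apply continuousOn_pi.mpr
      intro a
      apply continuousOn_pi.mpr
      intro a'
      exact hEntCont a (c a')
    exact (continuous_id.matrix_det).comp_continuousOn hmat
  have hdetSlice : ∀ (c : Fin k ⊕ Fin l → Fin m ⊕ Fin m)
      (q₀' w : (Fin m → ℂ) × (Fin m → ℂ)), DifferentiableOn ℂ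
      (fun t : ℂ => (Matrix.of fun a a' =>
        fderiv ℂ (H a) (q₀' + t • w) (basis2 (c a'))).det)
      {t : ℂ | q₀' + t • w ∈ Ω} := by
    intro c q₀' w
    have hexp : (fun t : ℂ => (Matrix.of fun a a' =>
        fderiv ℂ (H a) (q₀' + t • w) (basis2 (c a'))).det) =
        fun t => ∑ σ : Equiv.Perm (Fin k ⊕ Fin l),
          (Equiv.Perm.sign σ : ℂ) * ∏ a, fderiv ℂ (H (σ a)) (q₀' + t • w) (basis2 (c a)) := by
      funext t
      rw [Matrix.det_apply']
      rfl
    rw [hexp]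
    apply DifferentiableOn.fun_sum
    intro σ _
    apply DifferentiableOn.const_mul
    apply DifferentiableOn.fun_finsetProd
    intro a _
    exact hEntSlice (σ a) (c a) q₀' w
  -- independence at the base point q₀ = (x₀, 0)
  set q₀ : (Fin m → ℂ) × (Fin m → ℂ) := (x₀, 0) with hq₀def
  have hq₀U : q₀.1 ∈ U := hx₀
  have hq₀Ω : q₀ ∈ Ω := hΩmem.mpr hq₀U
  have hrows₀ : LinearIndependent ℂ
      (fun a (b : Fin m ⊕ Fin m) => fderiv ℂ (H a) q₀ (basis2 b)) := by
    rw [Fintype.linearIndependent_iff]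
    intro g hg
    have hgb : ∀ b : Fin m ⊕ Fin m, ∑ a, g a * fderiv ℂ (H a) q₀ (basis2 b) = 0 := by
      intro b
      have := congrFun hg b
      simpa [Finset.sum_apply] using this
    have hα : ∀ i, g (Sum.inl i) = 0 := by
      have hsum : ∑ i, g (Sum.inl i) • X i x₀ = 0 := by
        funext j₀
        have h1 := hgb (Sum.inr j₀)
        rw [Fintype.sum_sum_type] at h1
        have h2 : ∀ i : Fin k, g (Sum.inl i) * fderiv ℂ (H (Sum.inl i)) q₀
            (basis2 (Sum.inr j₀)) = g (Sum.inl i) * X i x₀ j₀ := by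
          intro i; rw [hE2 i j₀ q₀ hq₀U]
        have h3 : ∀ j : Fin l, g (Sum.inr j) * fderiv ℂ (H (Sum.inr j)) q₀
            (basis2 (Sum.inr j₀)) = 0 := by
          intro j; rw [hE4 j j₀ q₀ hq₀U, mul_zero]
        rw [Finset.sum_congr rfl (fun i _ => h2 i), Finset.sum_congr rfl (fun j _ => h3 j),
          Finset.sum_const_zero, add_zero] at h1
        simpa [Finset.sum_apply] using h1
      exact fun i => Fintype.linearIndependent_iff.mp hXind _ hsum i
    have hβ : ∀ j, g (Sum.inr j) = 0 := by
      have hT : ∑ j, g (Sum.inr j) • fderiv ℂ (f j) x₀ = 0 := by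
        have hTapp : ∀ j₀ : Fin m,
            (∑ j, g (Sum.inr j) • fderiv ℂ (f j) x₀) (Pi.single j₀ 1) = 0 := by
          intro j₀
          have h1 := hgb (Sum.inl j₀)
          rw [Fintype.sum_sum_type] at h1
          have h2 : ∀ i : Fin k, g (Sum.inl i) * fderiv ℂ (H (Sum.inl i)) q₀
              (basis2 (Sum.inl j₀)) = 0 := by
            intro i; rw [hα i, zero_mul]
          have h3 : ∀ j : Fin l, g (Sum.inr j) * fderiv ℂ (H (Sum.inr j)) q₀
              (basis2 (Sum.inl j₀)) = g (Sum.inr j) * fderiv ℂ (f j) x₀ (Pi.single j₀ 1) := by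
            intro j; rw [hE3 j j₀ q₀ hq₀U]
          rw [Finset.sum_congr rfl (fun i _ => h2 i), Finset.sum_const_zero, zero_add,
            Finset.sum_congr rfl (fun j _ => h3 j)] at h1
          rw [ContinuousLinearMap.sum_apply]
          simpa [ContinuousLinearMap.smul_apply] using h1
        ext x
        rw [ContinuousLinearMap.zero_apply]
        have hx : x = ∑ j₀, Pi.single j₀ (x j₀) := (Finset.univ_sum_single x).symm
        rw [hx, map_sum]
        apply Finset.sum_eq_zero
        intro j₀ _
        have hsingle : (Pi.single j₀ (x j₀) : Fin m → ℂ) = x j₀ • (Pi.single j₀ 1 : Fin m → ℂ) := by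
          rw [← Pi.single_smul, smul_eq_mul, mul_one]
        rw [hsingle, _root_.map_smul, hTapp j₀, smul_zero]
      exact fun j => Fintype.linearIndependent_iff.mp hfind _ hT j
    intro a
    rcases a with i | j
    · exact hα i
    · exact hβ j
  obtain ⟨c₀, hc₀⟩ := myExistsDet _ hrows₀
  -- Omega is preconnected
  have hΩpre : IsPreconnected Ω := hconn.isPreconnected.prod isPreconnected_univ
  constructor
  · rw [isOpen_iff_mem_nhds]
    rintro q ⟨hqU, hqli⟩
    have hqΩ : q ∈ Ω := hΩmem.mpr hqU
    obtain ⟨c, hc⟩ := myExistsDet _ (hforward q hqli)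
    have hcont := (hdetCont c).continuousAt (hΩopen.mem_nhds hqΩ)
    have hev := hcont.eventually_ne hc
    filter_upwards [hev, hΩopen.mem_nhds hqΩ] with q' h1 h2
    exact ⟨hΩmem.mp h2, hbackward q' c h1⟩
  · have hdens := myDensity
      (g := fun q' : (Fin m → ℂ) × (Fin m → ℂ) =>
        (Matrix.of fun a a' => fderiv ℂ (H a) q' (basis2 (c₀ a'))).det)
      hΩopen hΩpre (fun q₀' w => hdetSlice c₀ q₀' w) hq₀Ω hc₀
    intro q hq
    refine closure_mono ?_ (hdens q hq)
    rintro x ⟨hxΩ, hgx⟩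
    exact ⟨hΩmem.mp hxΩ, hbackward x c₀ hgx⟩
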